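/- arXiv:1401.2520 — 6 statements merged into one kernel-verified Lean document; each statement's English description precedes it below -/
import Mathlib

section
/- Let u : ℝ → ℝ³ be twice differentiable with |u(x)| = 1 and u_x(x) ≠ 0 for all x. Define Θ := |u_x| and η := ⟨u × u_x, u_xx⟩ / |u_x|². Then |u_xx|² = Θ⁴ + (Θ')² + η²Θ², where Θ' is the derivative of Θ. -/
open scoped RealInnerProductSpace

noncomputable def cross3 (a b : EuclideanSpace ℝ (Fin 3)) : EuclideanSpace ℝ (Fin 3) :=
  (EuclideanSpace.equiv (Fin 3) ℝ).symm
    (crossProduct ((EuclideanSpace.equiv (Fin 3) ℝ) a) ((EuclideanSpace.equiv (Fin 3) ℝ) b))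

lemma cross3_key (w u v : EuclideanSpace ℝ (Fin 3)) (hu : ⟪u,u⟫ = 1) (huv : ⟪u,v⟫ = 0) :
    ⟪w,w⟫ * ⟪v,v⟫ = ⟪w,u⟫^2 * ⟪v,v⟫ + ⟪w,v⟫^2 + ⟪cross3 u v, w⟫^2 := by
  simp only [cross3, EuclideanSpace.equiv, PiLp.inner_apply, RCLike.inner_apply, conj_trivial,
    Fin.sum_univ_three, crossProduct, LinearMap.mk₂_apply,
    PiLp.continuousLinearEquiv_symm_apply, PiLp.continuousLinearEquiv_apply,
    PiLp.coe_continuousLinearEquiv, PiLp.coe_symm_continuousLinearEquiv, PiLp.toLp_apply,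
    Matrix.cons_val_zero, Matrix.cons_val_one, Matrix.head_cons, Matrix.cons_val_two,
    Matrix.tail_cons] at *
  linear_combination -((w 0^2+w 1^2+w 2^2)*(v 0^2+v 1^2+v 2^2) - (w 0*v 0 + w 1*v 1 + w 2*v 2)^2) * hu - (2*(w 0*u 0+w 1*u 1+w 2*u 2)*(w 0*v 0+w 1*v 1+w 2*v 2) - (u 0*v 0+u 1*v 1+u 2*v 2)*(w 0^2+w 1^2+w 2^2)) * huv

theorem second_deriv_norm_sq_decomposition
    (u : ℝ → EuclideanSpace ℝ (Fin 3))
    (hu : ContDiff ℝ 2 u)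
    (hnorm : ∀ x, ‖u x‖ = 1)
    (hux : ∀ x, deriv u x ≠ 0)
    (Θ : ℝ → ℝ) (hΘ : Θ = fun x => ‖deriv u x‖)
    (η : ℝ → ℝ)
    (hη : η = fun x => ⟪cross3 (u x) (deriv u x), deriv (deriv u) x⟫ / ‖deriv u x‖ ^ 2) :
    ∀ x, ‖deriv (deriv u) x‖ ^ 2 =
      Θ x ^ 4 + (deriv Θ x) ^ 2 + (η x) ^ 2 * Θ x ^ 2 := by
  intro x
  have hud : Differentiable ℝ u := hu.differentiable two_ne_zero
  have hu2 : ContDiff ℝ 1 (deriv u) := ((contDiff_succ_iff_deriv (n := 1)).mp (by exact_mod_cast hu)).2.2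
  have hu2d : Differentiable ℝ (deriv u) := hu2.differentiable one_ne_zero
  have hdu : ∀ y, HasDerivAt u (deriv u y) y := fun y => (hud y).hasDerivAt
  have hdv : ∀ y, HasDerivAt (deriv u) (deriv (deriv u) y) y := fun y => (hu2d y).hasDerivAt
  set v := deriv u with hv
  set w := deriv (deriv u) with hw
  -- ⟪u,u⟫ = 1
  have h1 : ∀ y, ⟪u y, u y⟫ = 1 := by
    intro y
    rw [real_inner_self_eq_norm_sq, hnorm y]; norm_num
  -- ⟪u,v⟫ = 0
  have h2 : ∀ y, ⟪u y, v y⟫ = 0 := by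
    intro y
    have hD : HasDerivAt (fun t => ⟪u t, u t⟫) (⟪u y, v y⟫ + ⟪v y, u y⟫) y :=
      (hdu y).inner ℝ (hdu y)
    have hc : (fun t => ⟪u t, u t⟫) = fun _ => (1:ℝ) := funext h1
    rw [hc] at hD
    have := hD.unique (hasDerivAt_const y (1:ℝ))
    have hsym : ⟪v y, u y⟫ = ⟪u y, v y⟫ := real_inner_comm _ _
    linarith [hsym ▸ this]
  -- ⟪u,w⟫ = -⟪v,v⟫
  have h3 : ⟪u x, w x⟫ = -⟪v x, v x⟫ := by
    have hD : HasDerivAt (fun t => ⟪u t, v t⟫) (⟪u x, w x⟫ + ⟪v x, v x⟫) x :=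
      (hdu x).inner ℝ (hdv x)
    have hc : (fun t => ⟪u t, v t⟫) = fun _ => (0:ℝ) := funext h2
    rw [hc] at hD
    have := hD.unique (hasDerivAt_const x (0:ℝ))
    linarith
  have hvx : (0:ℝ) < ‖v x‖ := norm_pos_iff.mpr (hux x)
  -- deriv Θ
  have hΘx : ∀ y, Θ y = Real.sqrt ⟪v y, v y⟫ := by
    intro y
    rw [hΘ, real_inner_self_eq_norm_sq, Real.sqrt_sq (norm_nonneg _)]
  have hg : HasDerivAt (fun t => ⟪v t, v t⟫) (⟪v x, w x⟫ + ⟪w x, v x⟫) x :=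
    (hdv x).inner ℝ (hdv x)
  have hgx : ⟪v x, v x⟫ ≠ 0 := by
    rw [real_inner_self_eq_norm_sq]; positivity
  have hsq : HasDerivAt (fun t => Real.sqrt ⟪v t, v t⟫)
      (1 / (2 * Real.sqrt ⟪v x, v x⟫) * (⟪v x, w x⟫ + ⟪w x, v x⟫)) x :=
    (Real.hasDerivAt_sqrt hgx).comp x hg
  have hΘfun : Θ = fun t => Real.sqrt ⟪v t, v t⟫ := funext hΘx
  have hΘ' : deriv Θ x = ⟪v x, w x⟫ / ‖v x‖ := by
    rw [hΘfun, hsq.deriv]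
    have h1' : Real.sqrt ⟪v x, v x⟫ = ‖v x‖ := by
      rw [real_inner_self_eq_norm_sq, Real.sqrt_sq (norm_nonneg _)]
    have hsym : ⟪w x, v x⟫ = ⟪v x, w x⟫ := real_inner_comm _ _
    rw [h1', hsym]
    field_simp
    ring
  -- key identity
  have key := cross3_key (w x) (u x) (v x) (h1 x) (h2 x)
  have hww : ⟪w x, w x⟫ = ‖w x‖^2 := real_inner_self_eq_norm_sq _
  have hvv : ⟪v x, v x⟫ = Θ x ^ 2 := by rw [hΘ, real_inner_self_eq_norm_sq]
  have hwu : ⟪w x, u x⟫ = -(Θ x ^ 2) := by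
    rw [real_inner_comm, h3, hvv]
  have hwv : ⟪w x, v x⟫ = deriv Θ x * Θ x := by
    rw [real_inner_comm, hΘ', hΘ]
    field_simp
  have hcr : ⟪cross3 (u x) (v x), w x⟫ = η x * Θ x ^ 2 := by
    rw [hη, hΘ]
    field_simp
  rw [hww, hvv, hwu, hwv, hcr] at key
  have hT : Θ x ≠ 0 := by rw [hΘ]; positivity
  have hT2 : Θ x ^ 2 ≠ 0 := pow_ne_zero _ hT
  apply mul_right_cancel₀ hT2
  linear_combination key
end

section
/- Let q : ℝ → ℂ be twice differentiable and nonvanishing, with Θ := |q| and η := i(q·conj(q)_x - q_x·conj(q))/(2|q|²). Then q·(Θ_xx/Θ - η²) = q_xx/2 + conj(q)_xx·q²/(2|q|²). -/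
open Complex

theorem hashimoto_P_term
    (q : ℝ → ℂ) (hq : ContDiff ℝ 2 q) (hqne : ∀ x, q x ≠ 0)
    (Θ : ℝ → ℝ) (hΘ : Θ = fun x => ‖q x‖)
    (η : ℝ → ℂ)
    (hη : η = fun x =>
      Complex.I * (q x * deriv (fun y => starRingEnd ℂ (q y)) x -
        deriv q x * starRingEnd ℂ (q x)) / (2 * (‖q x‖ : ℂ) ^ 2)) :
    ∀ x,
      q x * ((deriv (deriv Θ) x / Θ x : ℝ) - (η x) ^ 2) =
        deriv (deriv q) x / 2 +
          deriv (deriv (fun y => starRingEnd ℂ (q y))) x * (q x) ^ 2 /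
            (2 * (‖q x‖ : ℂ) ^ 2) := by
  intro x
  have hq1 : Differentiable ℝ q := hq.differentiable (by norm_num)
  have hqd : ContDiff ℝ 1 (deriv q) := by
    have h := (contDiff_succ_iff_deriv (n := 1) (f := q)).mp (by exact_mod_cast hq)
    exact h.2.2
  have hq2 : Differentiable ℝ (deriv q) := hqd.differentiable one_ne_zero
  have hcd : (deriv fun y => starRingEnd ℂ (q y)) = fun y => starRingEnd ℂ (deriv q y) := by
    funext y
    exact ((hq1 y).hasDerivAt).star.deriv
  have hcd2 : (deriv (deriv fun y => starRingEnd ℂ (q y))) x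
      = starRingEnd ℂ (deriv (deriv q) x) := by
    rw [hcd]
    exact ((hq2 x).hasDerivAt).star.deriv
  have hu : ∀ y, HasDerivAt (fun t => (q t).re) ((deriv q y).re) y := fun y => by
    exact Complex.reCLM.hasFDerivAt.comp_hasDerivAt y (hq1 y).hasDerivAt
  have hv : ∀ y, HasDerivAt (fun t => (q t).im) ((deriv q y).im) y := fun y => by
    exact Complex.imCLM.hasFDerivAt.comp_hasDerivAt y (hq1 y).hasDerivAt
  have hu1 : ∀ y, HasDerivAt (fun t => (deriv q t).re) ((deriv (deriv q) y).re) y := fun y => by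
    exact Complex.reCLM.hasFDerivAt.comp_hasDerivAt y (hq2 y).hasDerivAt
  have hv1 : ∀ y, HasDerivAt (fun t => (deriv q t).im) ((deriv (deriv q) y).im) y := fun y => by
    exact Complex.imCLM.hasFDerivAt.comp_hasDerivAt y (hq2 y).hasDerivAt
  have hfpos : ∀ y, 0 < (q y).re ^ 2 + (q y).im ^ 2 := by
    intro y
    have h := Complex.normSq_pos.mpr (hqne y)
    simpa [Complex.normSq_apply, sq] using h
  have hf : ∀ y, HasDerivAt (fun t => (q t).re ^ 2 + (q t).im ^ 2)
      (2 * ((q y).re * (deriv q y).re + (q y).im * (deriv q y).im)) y := by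
    intro y
    have h : HasDerivAt (fun t => (q t).re ^ 2 + (q t).im ^ 2) _ y := ((hu y).pow 2).add ((hv y).pow 2)
    convert h using 1; push_cast; ring
  have hΘeq : Θ = fun y => Real.sqrt ((q y).re ^ 2 + (q y).im ^ 2) := by
    rw [hΘ]; funext y
    rw [Complex.norm_def, Complex.normSq_apply]
    congr 1; ring
  have hΘpos : ∀ y, 0 < Θ y := by
    intro y; rw [hΘeq]; exact Real.sqrt_pos.mpr (hfpos y)
  have hΘd : ∀ y, HasDerivAt Θ
      (((q y).re * (deriv q y).re + (q y).im * (deriv q y).im) / Θ y) y := by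
    intro y
    have h : HasDerivAt (fun y => Real.sqrt ((q y).re ^ 2 + (q y).im ^ 2)) _ y :=
      (Real.hasDerivAt_sqrt (ne_of_gt (hfpos y))).comp y (hf y)
    rw [hΘeq]
    convert h using 1
    have hne : Real.sqrt ((q y).re ^ 2 + (q y).im ^ 2) ≠ 0 :=
      ne_of_gt (Real.sqrt_pos.mpr (hfpos y))
    beta_reduce
    field_simp
  have hΘ' : deriv Θ = fun y =>
      ((q y).re * (deriv q y).re + (q y).im * (deriv q y).im) / Θ y :=
    funext fun y => (hΘd y).deriv
  have hNum : HasDerivAt (fun t => (q t).re * (deriv q t).re + (q t).im * (deriv q t).im)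
      ((deriv q x).re ^ 2 + (q x).re * (deriv (deriv q) x).re
        + ((deriv q x).im ^ 2 + (q x).im * (deriv (deriv q) x).im)) x := by
    have h : HasDerivAt (fun t => (q t).re * (deriv q t).re + (q t).im * (deriv q t).im) _ x :=
      ((hu x).mul (hu1 x)).add ((hv x).mul (hv1 x))
    convert h using 1; ring
  have hΘ2 : deriv (deriv Θ) x =
      (((deriv q x).re ^ 2 + (q x).re * (deriv (deriv q) x).re
        + ((deriv q x).im ^ 2 + (q x).im * (deriv (deriv q) x).im)) * Θ x
        - ((q x).re * (deriv q x).re + (q x).im * (deriv q x).im)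
          * (((q x).re * (deriv q x).re + (q x).im * (deriv q x).im) / Θ x)) / Θ x ^ 2 := by
    rw [hΘ']
    exact (hNum.div (hΘd x) (ne_of_gt (hΘpos x))).deriv
  have hs : Θ x ^ 2 = (q x).re ^ 2 + (q x).im ^ 2 := by
    rw [hΘeq]; exact Real.sq_sqrt (le_of_lt (hfpos x))
  have key : deriv (deriv Θ) x / Θ x =
      (((deriv q x).re ^ 2 + (q x).re * (deriv (deriv q) x).re
        + (deriv q x).im ^ 2 + (q x).im * (deriv (deriv q) x).im)
        * ((q x).re ^ 2 + (q x).im ^ 2)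
        - ((q x).re * (deriv q x).re + (q x).im * (deriv q x).im) ^ 2)
        / ((q x).re ^ 2 + (q x).im ^ 2) ^ 2 := by
    rw [hΘ2, ← hs]
    have hΘne := ne_of_gt (hΘpos x)
    field_simp
    ring
  -- complex-side coercion lemmas
  have ha : q x ≠ 0 := hqne x
  have hca : starRingEnd ℂ (q x) ≠ 0 := by
    exact star_ne_zero.mpr ha
  have hsC : ((‖q x‖ : ℝ) : ℂ) ^ 2 = q x * starRingEnd ℂ (q x) := by
    rw [Complex.mul_conj]
    norm_cast
    rw [← Complex.sq_norm]
  have hsC2 : (((q x).re ^ 2 + (q x).im ^ 2 : ℝ) : ℂ) = q x * starRingEnd ℂ (q x) := by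
    rw [Complex.mul_conj]
    norm_cast
    rw [Complex.normSq_apply]; ring
  have hM' : ((((q x).re * (deriv q x).re + (q x).im * (deriv q x).im : ℝ)) : ℂ)
      = (q x * starRingEnd ℂ (deriv q x) + deriv q x * starRingEnd ℂ (q x)) / 2 := by
    rw [eq_div_iff (two_ne_zero)]
    apply Complex.ext <;>
      simp [Complex.mul_re, Complex.mul_im] <;> ring
  have hN' : ((((deriv q x).re ^ 2 + (q x).re * (deriv (deriv q) x).re
        + (deriv q x).im ^ 2 + (q x).im * (deriv (deriv q) x).im : ℝ)) : ℂ)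
      = (2 * (deriv q x * starRingEnd ℂ (deriv q x))
          + deriv (deriv q) x * starRingEnd ℂ (q x)
          + q x * starRingEnd ℂ (deriv (deriv q) x)) / 2 := by
    rw [eq_div_iff (two_ne_zero)]
    apply Complex.ext <;>
      simp [Complex.mul_re, Complex.mul_im, sq] <;> ring
  have hηsq : η x ^ 2 =
      -((q x * starRingEnd ℂ (deriv q x) - deriv q x * starRingEnd ℂ (q x)) ^ 2)
        / (4 * (q x * starRingEnd ℂ (q x)) ^ 2) := by
    rw [hη]
    beta_reduce
    rw [hcd]
    beta_reduce
    rw [hsC]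
    rw [div_pow, mul_pow, Complex.I_sq]
    ring
  -- assemble
  rw [key, hcd2, hηsq, hsC]
  simp only [Complex.ofReal_div, Complex.ofReal_sub, Complex.ofReal_mul, Complex.ofReal_pow]
  rw [hsC2, hM', hN']
  have haa : q x * starRingEnd ℂ (q x) ≠ 0 := mul_ne_zero ha hca
  field_simp
  ring
end

section
/- Let q : ℝ → ℂ be twice differentiable and nonvanishing, with Θ := |q| and η := i(q·conj(q)_x - q_x·conj(q))/(2|q|²). Then i·q·η_x + 2i·q·η·(Θ_x/Θ) = q_xx/2 - conj(q)_xx·q²/(2|q|²). -/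
open Complex

private lemma hII (u v : ℂ) : Complex.I * u * (Complex.I * v) = -(u * v) := by
  rw [show Complex.I * u * (Complex.I * v) = Complex.I * Complex.I * (u * v) from by ring,
    Complex.I_mul_I]
  ring

private lemma hII2 (u v w : ℂ) :
    2 * Complex.I * u * (Complex.I * v) * w = -(2 * (u * v * w)) := by
  rw [show 2 * Complex.I * u * (Complex.I * v) * w
      = Complex.I * Complex.I * (2 * (u * v * w)) from by ring, Complex.I_mul_I]
  ring

theorem hashimoto_Q_term
    (q : ℝ → ℂ) (hq : ContDiff ℝ 2 q) (hqne : ∀ x, q x ≠ 0)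
    (Θ : ℝ → ℝ) (hΘ : Θ = fun x => ‖q x‖)
    (η : ℝ → ℂ)
    (hη : η = fun x =>
      Complex.I * (q x * deriv (fun y => starRingEnd ℂ (q y)) x -
        deriv q x * starRingEnd ℂ (q x)) / (2 * (‖q x‖ : ℂ) ^ 2)) :
    ∀ x,
      Complex.I * q x * deriv η x +
        2 * Complex.I * q x * η x * (((deriv Θ x : ℝ) : ℂ) / ((Θ x : ℝ) : ℂ)) =
      deriv (deriv q) x / 2 -
        deriv (deriv (fun y => starRingEnd ℂ (q y))) x * (q x) ^ 2 /
          (2 * (‖q x‖ : ℂ) ^ 2) := by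
  intro x
  have hdq : Differentiable ℝ q := hq.differentiable two_ne_zero
  have hq2 : ContDiff ℝ (1 + 1) q := by
    convert hq using 2
    exact one_add_one_eq_two
  have hq' : Differentiable ℝ (deriv q) :=
    (contDiff_succ_iff_deriv.mp hq2).2.2.differentiable one_ne_zero
  -- derivative of conjugate
  have hcd : ∀ y, HasDerivAt (fun z => starRingEnd ℂ (q z))
      (starRingEnd ℂ (deriv q y)) y := by
    intro y
    simpa only [starRingEnd_apply] using ((hdq y).hasDerivAt).star
  have hc : (deriv fun z => starRingEnd ℂ (q z)) = fun y => starRingEnd ℂ (deriv q y) :=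
    funext fun y => (hcd y).deriv
  have hcd2 : HasDerivAt (fun z => starRingEnd ℂ (deriv q z))
      (starRingEnd ℂ (deriv (deriv q) x)) x := by
    simpa only [starRingEnd_apply] using ((hq' x).hasDerivAt).star
  have hc2 : deriv (deriv fun z => starRingEnd ℂ (q z)) x
      = starRingEnd ℂ (deriv (deriv q) x) := by
    rw [hc]; exact hcd2.deriv
  -- norm squared
  have hN : ∀ y, ((‖q y‖ : ℂ)) ^ 2 = q y * starRingEnd ℂ (q y) := by
    intro y
    rw [Complex.mul_conj]
    norm_cast
    rw [Complex.normSq_eq_norm_sq]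
  -- rewrite η
  have hη3 : η = fun y => Complex.I *
      ((q y * starRingEnd ℂ (deriv q y) - deriv q y * starRingEnd ℂ (q y)) /
        (2 * (q y * starRingEnd ℂ (q y)))) := by
    rw [hη]
    funext y
    rw [hc, ← hN y]
    ring
  have ha : q x ≠ 0 := hqne x
  have ha' : starRingEnd ℂ (q x) ≠ 0 := by
    simpa using ha
  have hvne : (2 : ℂ) * (q x * starRingEnd ℂ (q x)) ≠ 0 := by
    simp [ha, ha']
  -- derivative of η
  have hu : HasDerivAt
      (fun y => q y * starRingEnd ℂ (deriv q y) - deriv q y * starRingEnd ℂ (q y))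
      ((deriv q x * starRingEnd ℂ (deriv q x) + q x * starRingEnd ℂ (deriv (deriv q) x)) -
        (deriv (deriv q) x * starRingEnd ℂ (q x) + deriv q x * starRingEnd ℂ (deriv q x))) x :=
    (((hdq x).hasDerivAt.mul hcd2)).sub (((hq' x).hasDerivAt).mul (hcd x))
  have hv : HasDerivAt (fun y => 2 * (q y * starRingEnd ℂ (q y)))
      (2 * (deriv q x * starRingEnd ℂ (q x) + q x * starRingEnd ℂ (deriv q x))) x :=
    (((hdq x).hasDerivAt.mul (hcd x))).const_mul 2
  have hηd : deriv η x = Complex.I *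
      ((((deriv q x * starRingEnd ℂ (deriv q x) + q x * starRingEnd ℂ (deriv (deriv q) x)) -
          (deriv (deriv q) x * starRingEnd ℂ (q x) + deriv q x * starRingEnd ℂ (deriv q x))) *
          (2 * (q x * starRingEnd ℂ (q x))) -
        (q x * starRingEnd ℂ (deriv q x) - deriv q x * starRingEnd ℂ (q x)) *
          (2 * (deriv q x * starRingEnd ℂ (q x) + q x * starRingEnd ℂ (deriv q x)))) /
        (2 * (q x * starRingEnd ℂ (q x))) ^ 2) := by
    rw [hη3]
    exact ((hu.div hv hvne).const_mul Complex.I).deriv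
  -- derivative of Θ
  have hΘF : Θ = fun y => Real.sqrt ((q y).re * (q y).re + (q y).im * (q y).im) := by
    rw [hΘ]
    funext y
    rw [Complex.norm_def, Complex.normSq_apply]
  have hre : ∀ y, HasDerivAt (fun z => (q z).re) (deriv q y).re y := fun y =>
    Complex.reCLM.hasFDerivAt.comp_hasDerivAt y (hdq y).hasDerivAt
  have him : ∀ y, HasDerivAt (fun z => (q z).im) (deriv q y).im y := fun y =>
    Complex.imCLM.hasFDerivAt.comp_hasDerivAt y (hdq y).hasDerivAt
  have hFne : (q x).re * (q x).re + (q x).im * (q x).im ≠ 0 := by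
    rw [← Complex.normSq_apply]
    exact Complex.normSq_eq_zero.not.mpr ha
  have hΘd : HasDerivAt Θ
      (((deriv q x).re * (q x).re + (q x).re * (deriv q x).re +
        ((deriv q x).im * (q x).im + (q x).im * (deriv q x).im)) /
        (2 * Real.sqrt ((q x).re * (q x).re + (q x).im * (q x).im))) x := by
    rw [hΘF]
    exact (((hre x).mul (hre x)).add ((him x).mul (him x))).sqrt hFne
  have hΘx : Θ x = Real.sqrt ((q x).re * (q x).re + (q x).im * (q x).im) := by
    rw [hΘF]
  have hΘne : Θ x ≠ 0 := by
    simp only [hΘ]; simpa using ha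
  have hΘsq : Θ x * Θ x = (q x).re * (q x).re + (q x).im * (q x).im := by
    simp only [hΘ]
    rw [← Complex.normSq_apply, Complex.normSq_eq_norm_sq, sq]
  have hΘc : ((Θ x : ℝ) : ℂ) ≠ 0 := by exact_mod_cast hΘne
  have hD' : deriv q x * starRingEnd ℂ (q x) + q x * starRingEnd ℂ (deriv q x)
      = ((2 * ((q x).re * (deriv q x).re + (q x).im * (deriv q x).im) : ℝ) : ℂ) := by
    apply Complex.ext <;>
      simp [Complex.mul_re, Complex.mul_im] <;> ring
  have hNc : q x * starRingEnd ℂ (q x) = ((Θ x * Θ x : ℝ) : ℂ) := by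
    rw [Complex.mul_conj]
    norm_cast
    rw [hΘsq, Complex.normSq_apply]
  have hT : ((deriv Θ x : ℝ) : ℂ) / ((Θ x : ℝ) : ℂ)
      = (deriv q x * starRingEnd ℂ (q x) + q x * starRingEnd ℂ (deriv q x)) /
        (2 * (q x * starRingEnd ℂ (q x))) := by
    rw [hΘd.deriv, hD', hNc, ← hΘx]
    push_cast
    field_simp
    ring
  -- final algebra
  rw [hηd, hc2, hN x, hT]
  simp only [hη3]
  rw [hII, hII2]
  field_simp
  ring
end

section
/- Let q : ℝ → ℂ be twice differentiable and nonvanishing, Θ := |q|, η := i(q·conj(q)_x - q_x·conj(q))/(2|q|²). Then q·(Θ_xx/Θ - η² + i(η_x + 2ηΘ_x/Θ)) = q_xx. That is, the sum of the two expressions P = q(Θ_xx/Θ - η²) and Q = iq(η_x + 2ηΘ_x/Θ) equals q_xx. -/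
open Complex

set_option maxHeartbeats 1000000 in
theorem hashimoto_P_add_Q
    (q : ℝ → ℂ) (hq : ContDiff ℝ 2 q) (hqne : ∀ x, q x ≠ 0)
    (Θ : ℝ → ℝ) (hΘ : Θ = fun x => ‖q x‖)
    (η : ℝ → ℂ)
    (hη : η = fun x =>
      Complex.I * (q x * deriv (fun y => starRingEnd ℂ (q y)) x -
        deriv q x * starRingEnd ℂ (q x)) / (2 * (‖q x‖ : ℂ) ^ 2)) :
    ∀ x,
      q x * (((deriv (deriv Θ) x / Θ x : ℝ) : ℂ) - (η x) ^ 2 +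
        Complex.I * (deriv η x + 2 * η x * (((deriv Θ x : ℝ) : ℂ) / ((Θ x : ℝ) : ℂ)))) =
      deriv (deriv q) x := by
  intro x
  have hq1 : Differentiable ℝ q := hq.differentiable (by norm_num)
  have hqd : Differentiable ℝ (deriv q) := by
    have h2 : ContDiff ℝ ((1:ℕ) + 1) q := by exact_mod_cast hq
    exact (contDiff_succ_iff_deriv.mp h2).2.2.differentiable (by norm_num)
  have hA1 : ∀ t, HasDerivAt (fun t => (q t).re) ((deriv q t).re) t := fun t =>
    Complex.reCLM.hasFDerivAt.comp_hasDerivAt t (hq1 t).hasDerivAt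
  have hB1 : ∀ t, HasDerivAt (fun t => (q t).im) ((deriv q t).im) t := fun t =>
    Complex.imCLM.hasFDerivAt.comp_hasDerivAt t (hq1 t).hasDerivAt
  have hA2 : ∀ t, HasDerivAt (fun t => (deriv q t).re) ((deriv (deriv q) t).re) t := fun t =>
    Complex.reCLM.hasFDerivAt.comp_hasDerivAt t (hqd t).hasDerivAt
  have hB2 : ∀ t, HasDerivAt (fun t => (deriv q t).im) ((deriv (deriv q) t).im) t := fun t =>
    Complex.imCLM.hasFDerivAt.comp_hasDerivAt t (hqd t).hasDerivAt
  let N : ℝ → ℝ := fun t => (q t).re ^ 2 + (q t).im ^ 2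
  have hN0 : ∀ t, 0 < N t := fun t => by
    have h := Complex.normSq_pos.mpr (hqne t)
    simpa [Complex.normSq_apply, N, sq] using h
  have hNne : ∀ t, N t ≠ 0 := fun t => (hN0 t).ne'
  have hS : ∀ t, Real.sqrt (N t) ≠ 0 := fun t => Real.sqrt_ne_zero'.mpr (hN0 t)
  have hnorm : ∀ t, ‖q t‖ ^ 2 = N t := fun t => by
    show _ = (q t).re ^ 2 + (q t).im ^ 2
    rw [← Complex.normSq_eq_norm_sq, Complex.normSq_apply]
    ring
  have hΘfun : Θ = fun t => Real.sqrt (N t) := by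
    funext t
    rw [hΘ]
    show ‖q t‖ = Real.sqrt (N t)
    rw [show ‖q t‖ = Real.sqrt (‖q t‖ ^ 2) from (Real.sqrt_sq (norm_nonneg _)).symm, hnorm]
  have hNd : ∀ t, HasDerivAt N
      (2 * (q t).re * (deriv q t).re + 2 * (q t).im * (deriv q t).im) t := fun t => by
    have := ((hA1 t).pow 2).add ((hB1 t).pow 2)
    refine this.congr_deriv ?_
    ring
  have hΘd : ∀ t, HasDerivAt Θ
      (((q t).re * (deriv q t).re + (q t).im * (deriv q t).im) / Real.sqrt (N t)) t := fun t => by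
    rw [hΘfun]
    have h1 := (Real.hasDerivAt_sqrt (hNne t)).comp t (hNd t)
    refine h1.congr_deriv ?_
    field_simp
  have hΘ' : deriv Θ = fun t =>
      ((q t).re * (deriv q t).re + (q t).im * (deriv q t).im) / Real.sqrt (N t) :=
    funext fun t => (hΘd t).deriv
  have hnum : HasDerivAt (fun t => (q t).re * (deriv q t).re + (q t).im * (deriv q t).im)
      ((deriv q x).re * (deriv q x).re + (q x).re * (deriv (deriv q) x).re +
        ((deriv q x).im * (deriv q x).im + (q x).im * (deriv (deriv q) x).im)) x :=
    ((hA1 x).mul (hA2 x)).add ((hB1 x).mul (hB2 x))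
  have hden : HasDerivAt (fun t => Real.sqrt (N t))
      (((q x).re * (deriv q x).re + (q x).im * (deriv q x).im) / Real.sqrt (N x)) x := by
    have h1 := (Real.hasDerivAt_sqrt (hNne x)).comp x (hNd x)
    refine h1.congr_deriv ?_
    field_simp
  have hΘdd : deriv (deriv Θ) x =
      (((deriv q x).re * (deriv q x).re + (q x).re * (deriv (deriv q) x).re +
        ((deriv q x).im * (deriv q x).im + (q x).im * (deriv (deriv q) x).im)) * Real.sqrt (N x)
        - ((q x).re * (deriv q x).re + (q x).im * (deriv q x).im) *
          (((q x).re * (deriv q x).re + (q x).im * (deriv q x).im) / Real.sqrt (N x)))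
        / Real.sqrt (N x) ^ 2 := by
    rw [hΘ']
    exact (hnum.div hden (hS x)).deriv
  have hconjD : ∀ t, deriv (fun y => starRingEnd ℂ (q y)) t = starRingEnd ℂ (deriv q t) :=
    fun t => ((by simpa using ((hq1 t).hasDerivAt).star :
      HasDerivAt (fun y => starRingEnd ℂ (q y)) (starRingEnd ℂ (deriv q t)) t)).deriv
  let w : ℝ → ℝ := fun t => ((q t).re * (deriv q t).im - (deriv q t).re * (q t).im) / N t
  have hwt : ∀ t, w t = ((q t).re * (deriv q t).im - (deriv q t).re * (q t).im) / N t :=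
    fun t => rfl
  have hηfun : η = fun t => ((w t : ℝ) : ℂ) := by
    funext t
    simp only [hη]
    rw [hconjD t]
    have h2 : (2 * ((‖q t‖ : ℝ) : ℂ) ^ 2) ≠ 0 := by
      have : ((‖q t‖ : ℝ) : ℂ) ≠ 0 := by
        exact_mod_cast norm_ne_zero_iff.mpr (hqne t)
      exact mul_ne_zero two_ne_zero (pow_ne_zero 2 this)
    rw [div_eq_iff h2]
    have hc : ((‖q t‖ : ℝ) : ℂ) ^ 2 = ((N t : ℝ) : ℂ) := by
      rw [← Complex.ofReal_pow, hnorm t]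
    rw [hc]
    have hR : (w t) * (2 * N t) =
        2 * ((q t).re * (deriv q t).im - (deriv q t).re * (q t).im) := by
      have hne' : (q t).re ^ 2 + (q t).im ^ 2 ≠ 0 := hNne t
      rw [hwt]
      show _ / ((q t).re ^ 2 + (q t).im ^ 2) * _ = _
      field_simp
      simp only [show N t = (q t).re ^ 2 + (q t).im ^ 2 from rfl]
    calc Complex.I * (q t * starRingEnd ℂ (deriv q t) - deriv q t * starRingEnd ℂ (q t))
        = ((2 * ((q t).re * (deriv q t).im - (deriv q t).re * (q t).im) : ℝ) : ℂ) := by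
          apply Complex.ext <;>
            simp [Complex.mul_re, Complex.mul_im] <;> ring
      _ = ((w t * (2 * N t) : ℝ) : ℂ) := by rw [hR]
      _ = ((w t : ℝ) : ℂ) * (2 * ((N t : ℝ) : ℂ)) := by push_cast; ring
  have hw : HasDerivAt w
      ((((deriv q x).re * (deriv q x).im + (q x).re * (deriv (deriv q) x).im -
        ((deriv (deriv q) x).re * (q x).im + (deriv q x).re * (deriv q x).im)) * N x -
        ((q x).re * (deriv q x).im - (deriv q x).re * (q x).im) *
          (2 * (q x).re * (deriv q x).re + 2 * (q x).im * (deriv q x).im)) / N x ^ 2) x :=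
    ((((hA1 x).mul (hB2 x)).sub ((hA2 x).mul (hB1 x)))).div (hNd x) (hNne x)
  have hηd : deriv η x = ((((deriv q x).re * (deriv q x).im + (q x).re * (deriv (deriv q) x).im -
        ((deriv (deriv q) x).re * (q x).im + (deriv q x).re * (deriv q x).im)) * N x -
        ((q x).re * (deriv q x).im - (deriv q x).re * (q x).im) *
          (2 * (q x).re * (deriv q x).re + 2 * (q x).im * (deriv q x).im)) / N x ^ 2 : ℝ) := by
    rw [hηfun]
    exact (Complex.ofRealCLM.hasFDerivAt.comp_hasDerivAt x hw).deriv
  -- key real simplifications removing sqrt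
  have hT2 : deriv (deriv Θ) x / Θ x =
      (((deriv q x).re * (deriv q x).re + (q x).re * (deriv (deriv q) x).re +
        ((deriv q x).im * (deriv q x).im + (q x).im * (deriv (deriv q) x).im)) * N x -
        ((q x).re * (deriv q x).re + (q x).im * (deriv q x).im) ^ 2) / N x ^ 2 := by
    rw [hΘdd, hΘfun]
    show _ / Real.sqrt (N x) = _
    have hSne := hS x
    have hSx2 : Real.sqrt (N x) ^ 2 = N x := Real.sq_sqrt (hN0 x).le
    generalize hSg : Real.sqrt (N x) = S at hSne hSx2 ⊢
    rw [← hSx2]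
    field_simp
  have hT1 : deriv Θ x / Θ x =
      ((q x).re * (deriv q x).re + (q x).im * (deriv q x).im) / N x := by
    rw [hΘ', hΘfun]
    show _ / Real.sqrt (N x) / Real.sqrt (N x) = _
    have hSne := hS x
    have hSx2 : Real.sqrt (N x) ^ 2 = N x := Real.sq_sqrt (hN0 x).le
    generalize hSg : Real.sqrt (N x) = S at hSne hSx2 ⊢
    rw [← hSx2, div_div, sq]
  rw [hT2, hηd, hηfun]
  simp only
  rw [show ((deriv Θ x : ℝ) : ℂ) / ((Θ x : ℝ) : ℂ) =
      ((((q x).re * (deriv q x).re + (q x).im * (deriv q x).im) / N x : ℝ) : ℂ) from by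
    rw [← Complex.ofReal_div, hT1]]
  rw [hwt]
  have hNx : N x = (q x).re ^ 2 + (q x).im ^ 2 := rfl
  have hne : (q x).re ^ 2 + (q x).im ^ 2 ≠ 0 := by rw [← hNx]; exact hNne x
  rw [hNx]
  apply Complex.ext <;>
  · simp only [pow_two, Complex.mul_re, Complex.mul_im, Complex.add_re, Complex.add_im,
      Complex.sub_re, Complex.sub_im, Complex.I_re, Complex.I_im,
      Complex.ofReal_re, Complex.ofReal_im,
      Complex.re_ofNat, Complex.im_ofNat]
    field_simp [hne]
    ring_nf
end

section
/- Let u : ℝ → ℝ³ with |u| = 1, u_x ≠ 0, and set Θ := |u_x|, η := ⟨u × u_x, u_xx⟩/Θ². If u is sufficiently smooth then ⟨u_xx × u, u_xxx⟩ = ηΘΘ_xx - ηΘ⁴ - η³Θ² - ΘΘ_x η_x - 2η(Θ_x)². -/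
open scoped RealInnerProductSpace

private lemma inner3 (a b : EuclideanSpace ℝ (Fin 3)) :
    ⟪a, b⟫ = a 0 * b 0 + a 1 * b 1 + a 2 * b 2 := by
  simp [PiLp.inner_apply, Fin.sum_univ_three, RCLike.inner_apply]; ring

private lemma cross3_0 (a b : EuclideanSpace ℝ (Fin 3)) :
    cross3 a b 0 = a 1 * b 2 - a 2 * b 1 := by simp [cross3, crossProduct]
private lemma cross3_1 (a b : EuclideanSpace ℝ (Fin 3)) :
    cross3 a b 1 = a 2 * b 0 - a 0 * b 2 := by simp [cross3, crossProduct]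
private lemma cross3_2 (a b : EuclideanSpace ℝ (Fin 3)) :
    cross3 a b 2 = a 0 * b 1 - a 1 * b 0 := by simp [cross3, crossProduct]

private lemma crossinner (a b c : EuclideanSpace ℝ (Fin 3)) :
    ⟪cross3 a b, c⟫ = (a 1 * b 2 - a 2 * b 1) * c 0 + (a 2 * b 0 - a 0 * b 2) * c 1 +
      (a 0 * b 1 - a 1 * b 0) * c 2 := by
  rw [inner3, cross3_0, cross3_1, cross3_2]

private lemma lemA (u v w z : EuclideanSpace ℝ (Fin 3)) :
    (⟪u,u⟫*⟪v,v⟫ - ⟪u,v⟫^2) * ⟪cross3 w u, z⟫ =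
      -(⟪w,v⟫*⟪u,u⟫ - ⟪w,u⟫*⟪u,v⟫) * ⟪cross3 u v, z⟫ +
        ⟪cross3 u v, w⟫ * (⟪u,u⟫*⟪v,z⟫ - ⟪u,v⟫*⟪u,z⟫) := by
  simp only [inner3, cross3_0, cross3_1, cross3_2]; ring

private lemma lemB (u v w : EuclideanSpace ℝ (Fin 3)) :
    (⟪u,u⟫*⟪v,v⟫ - ⟪u,v⟫^2) * ⟪w,w⟫ =
      (⟪w,u⟫*⟪v,v⟫ - ⟪w,v⟫*⟪u,v⟫)*⟪w,u⟫ + (⟪w,v⟫*⟪u,u⟫ - ⟪w,u⟫*⟪u,v⟫)*⟪w,v⟫ +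
        ⟪cross3 u v, w⟫^2 := by
  simp only [inner3, cross3_0, cross3_1, cross3_2]; ring

private lemma coordDeriv {f : ℝ → EuclideanSpace ℝ (Fin 3)} {f' : EuclideanSpace ℝ (Fin 3)}
    {x : ℝ} (hf : HasDerivAt f f' x) (i : Fin 3) : HasDerivAt (fun t => f t i) (f' i) x := by
  simpa [EuclideanSpace.proj, Function.comp_def] using (EuclideanSpace.proj i).hasFDerivAt.comp_hasDerivAt x hf

theorem cross_uxx_u_uxxx_identity
    (u : ℝ → EuclideanSpace ℝ (Fin 3))
    (hu : ContDiff ℝ 3 u)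
    (hnorm : ∀ x, ‖u x‖ = 1)
    (hux : ∀ x, deriv u x ≠ 0)
    (Θ : ℝ → ℝ) (hΘ : Θ = fun x => ‖deriv u x‖)
    (η : ℝ → ℝ)
    (hη : η = fun x => ⟪cross3 (u x) (deriv u x), deriv (deriv u) x⟫ / ‖deriv u x‖ ^ 2) :
    ∀ x,
      ⟪cross3 (deriv (deriv u) x) (u x), deriv (deriv (deriv u)) x⟫ =
        η x * Θ x * deriv (deriv Θ) x - η x * Θ x ^ 4 - η x ^ 3 * Θ x ^ 2 -
          Θ x * deriv Θ x * deriv η x - 2 * η x * (deriv Θ x) ^ 2 := by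
  set v := deriv u with hv_def
  set w := deriv v with hw_def
  set z := deriv w with hz_def
  -- smoothness
  have h32 : (3 : WithTop ℕ∞) = 2 + 1 := by norm_num
  have h21 : (2 : WithTop ℕ∞) = 1 + 1 := by norm_num
  have hu' : ContDiff ℝ (2+1) u := h32 ▸ hu
  have hv2 : ContDiff ℝ 2 v := (contDiff_succ_iff_deriv.mp hu').2.2
  have hv2' : ContDiff ℝ (1+1) v := h21 ▸ hv2
  have hw1 : ContDiff ℝ 1 w := (contDiff_succ_iff_deriv.mp hv2').2.2
  have hdu : ∀ x, HasDerivAt u (v x) x := fun x =>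
    ((hu.differentiable (by norm_num)) x).hasDerivAt
  have hdv : ∀ x, HasDerivAt v (w x) x := fun x =>
    ((hv2.differentiable (by norm_num)) x).hasDerivAt
  have hdw : ∀ x, HasDerivAt w (z x) x := fun x =>
    ((hw1.differentiable (by norm_num)) x).hasDerivAt
  -- constraints
  have huu : ∀ x, ⟪u x, u x⟫ = 1 := fun x => by
    rw [real_inner_self_eq_norm_sq, hnorm, one_pow]
  have huv : ∀ x, ⟪u x, v x⟫ = 0 := by
    intro x
    have h1 : HasDerivAt (fun t => ⟪u t, u t⟫) (⟪u x, v x⟫ + ⟪v x, u x⟫) x :=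
      HasDerivAt.inner ℝ (hdu x) (hdu x)
    have h2 : HasDerivAt (fun t => ⟪u t, u t⟫) 0 x := by
      have he : (fun t => ⟪u t, u t⟫) = fun _ => (1:ℝ) := funext fun t => huu t
      rw [he]; exact hasDerivAt_const x 1
    have h3 := h1.unique h2
    have h4 : ⟪v x, u x⟫ = ⟪u x, v x⟫ := real_inner_comm _ _
    linarith
  have huw : ∀ x, ⟪u x, w x⟫ = -⟪v x, v x⟫ := by
    intro x
    have h1 : HasDerivAt (fun t => ⟪u t, v t⟫) (⟪u x, w x⟫ + ⟪v x, v x⟫) x :=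
      HasDerivAt.inner ℝ (hdu x) (hdv x)
    have h2 : HasDerivAt (fun t => ⟪u t, v t⟫) 0 x := by
      have he : (fun t => ⟪u t, v t⟫) = fun _ => (0:ℝ) := funext fun t => huv t
      rw [he]; exact hasDerivAt_const x 0
    have h3 := h1.unique h2
    linarith
  -- Θ facts
  have hQpos : ∀ x, (0:ℝ) < ⟪v x, v x⟫ := fun x => by
    rw [real_inner_self_eq_norm_sq]; exact pow_pos (norm_pos_iff.mpr (hux x)) 2
  have hΘpos : ∀ x, 0 < Θ x := fun x => by
    rw [hΘ]; exact norm_pos_iff.mpr (hux x)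
  have hΘsq : ∀ x, Θ x ^ 2 = ⟪v x, v x⟫ := fun x => by
    rw [hΘ]; exact (real_inner_self_eq_norm_sq _).symm
  have hΘsqrt : Θ = fun x => Real.sqrt ⟪v x, v x⟫ := by
    rw [hΘ]; funext x; rw [real_inner_self_eq_norm_sq, Real.sqrt_sq (norm_nonneg _)]
  have hQd : ∀ x, HasDerivAt (fun t => ⟪v t, v t⟫) (2 * ⟪v x, w x⟫) x := by
    intro x
    have h1 := HasDerivAt.inner ℝ (hdv x) (hdv x)
    have h2 : ⟪v x, w x⟫ + ⟪w x, v x⟫ = 2 * ⟪v x, w x⟫ := by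
      rw [real_inner_comm (w x) (v x)]; ring
    rw [h2] at h1; exact h1
  have hΘd : ∀ x, HasDerivAt Θ (⟪v x, w x⟫ / Θ x) x := by
    intro x
    have h := (Real.hasDerivAt_sqrt (ne_of_gt (hQpos x))).comp x (hQd x)
    have h2 : HasDerivAt (fun t => Real.sqrt ⟪v t, v t⟫)
        (1 / (2 * Real.sqrt ⟪v x, v x⟫) * (2 * ⟪v x, w x⟫)) x := h
    have hs : Real.sqrt ⟪v x, v x⟫ ≠ 0 := ne_of_gt (Real.sqrt_pos.mpr (hQpos x))
    have h3 : ⟪v x, w x⟫ / Real.sqrt ⟪v x, v x⟫ =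
        1 / (2 * Real.sqrt ⟪v x, v x⟫) * (2 * ⟪v x, w x⟫) := by
      rw [one_div, inv_mul_eq_div, mul_div_mul_left _ _ (two_ne_zero (α := ℝ))]
    rw [hΘsqrt, h3]; exact h2
  have hΘderiv : deriv Θ = fun x => ⟪v x, w x⟫ / Θ x := funext fun x => (hΘd x).deriv
  have hAd : ∀ x, HasDerivAt (fun t => ⟪v t, w t⟫) (⟪v x, z x⟫ + ⟪w x, w x⟫) x := fun x =>
    HasDerivAt.inner ℝ (hdv x) (hdw x)
  have hΘ2 : ∀ x, deriv (deriv Θ) x =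
      ((⟪v x, z x⟫ + ⟪w x, w x⟫) * Θ x - ⟪v x, w x⟫ * (⟪v x, w x⟫ / Θ x)) / Θ x ^ 2 := by
    intro x
    rw [hΘderiv]
    exact ((hAd x).div (hΘd x) (ne_of_gt (hΘpos x))).deriv
  -- N and its derivative
  have pu : ∀ x (i : Fin 3), HasDerivAt (fun t => u t i) (v x i) x := fun x i =>
    coordDeriv (hdu x) i
  have pv : ∀ x (i : Fin 3), HasDerivAt (fun t => v t i) (w x i) x := fun x i =>
    coordDeriv (hdv x) i
  have pw : ∀ x (i : Fin 3), HasDerivAt (fun t => w t i) (z x i) x := fun x i =>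
    coordDeriv (hdw x) i
  have hNd : ∀ x, HasDerivAt (fun t => ⟪cross3 (u t) (v t), w t⟫)
      (⟪cross3 (u x) (v x), z x⟫) x := by
    intro x
    have hbig := (((((pu x 1).mul (pv x 2)).sub ((pu x 2).mul (pv x 1))).mul (pw x 0)).add
      (((((pu x 2).mul (pv x 0)).sub ((pu x 0).mul (pv x 2)))).mul (pw x 1))).add
      ((((pu x 0).mul (pv x 1)).sub ((pu x 1).mul (pv x 0))).mul (pw x 2))
    have hfun : (fun t => ⟪cross3 (u t) (v t), w t⟫) =
        (fun t => (u t 1 * v t 2 - u t 2 * v t 1) * w t 0 +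
          (u t 2 * v t 0 - u t 0 * v t 2) * w t 1 +
          (u t 0 * v t 1 - u t 1 * v t 0) * w t 2) := funext fun t => crossinner _ _ _
    rw [hfun]
    refine HasDerivAt.congr_deriv hbig ?_
    rw [crossinner]; simp only [Pi.mul_apply, Pi.sub_apply]; ring
  have hη' : η = fun x => ⟪cross3 (u x) (v x), w x⟫ / ⟪v x, v x⟫ := by
    rw [hη]; funext x; rw [real_inner_self_eq_norm_sq]
  have hηd : ∀ x, HasDerivAt η
      ((⟪cross3 (u x) (v x), z x⟫ * ⟪v x, v x⟫ -
        ⟪cross3 (u x) (v x), w x⟫ * (2 * ⟪v x, w x⟫)) / ⟪v x, v x⟫ ^ 2) x := by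
    intro x
    rw [hη']
    exact (hNd x).div (hQd x) (ne_of_gt (hQpos x))
  -- final pointwise computation
  intro x
  have hT0 : Θ x ≠ 0 := ne_of_gt (hΘpos x)
  have hQT : ⟪v x, v x⟫ = Θ x ^ 2 := (hΘsq x).symm
  have hwv : ⟪w x, v x⟫ = ⟪v x, w x⟫ := real_inner_comm _ _
  have hwu : ⟪w x, u x⟫ = -(Θ x ^ 2) := by rw [real_inner_comm, huw x, hQT]
  -- Lemma A specialized
  have gA := lemA (u x) (v x) (w x) (z x)
  rw [huu x, huv x, hQT, hwv] at gA
  -- gA : (1 * Θx^2 - 0^2) * LHS = -(A*1 - wu*0) * P + N * (1*C - 0*uz)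
  have hLHS : ⟪cross3 (w x) (u x), z x⟫ =
      (-(⟪v x, w x⟫ * ⟪cross3 (u x) (v x), z x⟫) +
        ⟪cross3 (u x) (v x), w x⟫ * ⟪v x, z x⟫) / Θ x ^ 2 := by
    rw [eq_div_iff (by positivity)]
    linear_combination gA
  have gB := lemB (u x) (v x) (w x)
  rw [huu x, huv x, hQT, hwv, hwu] at gB
  have hB : ⟪w x, w x⟫ =
      ((Θ x ^ 2) ^ 3 + ⟪v x, w x⟫ ^ 2 + ⟪cross3 (u x) (v x), w x⟫ ^ 2) / Θ x ^ 2 := by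
    rw [eq_div_iff (by positivity)]
    linear_combination gB
  have hηx : η x = ⟪cross3 (u x) (v x), w x⟫ / Θ x ^ 2 := by
    rw [hη']
    show ⟪cross3 (u x) (v x), w x⟫ / ⟪v x, v x⟫ = _
    rw [hQT]
  have hΘ1x : deriv Θ x = ⟪v x, w x⟫ / Θ x := by rw [hΘderiv]

  have hη1x : deriv η x =
      (⟪cross3 (u x) (v x), z x⟫ * Θ x ^ 2 -
        ⟪cross3 (u x) (v x), w x⟫ * (2 * ⟪v x, w x⟫)) / (Θ x ^ 2) ^ 2 := by
    rw [(hηd x).deriv, hQT]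
  rw [hLHS, hηx, hΘ1x, hη1x, hΘ2 x, hB]
  field_simp
  ring
end

section
/- Let u, e : ℝ → ℝ³ satisfy u_x = q¹ e + q² (u × e) and e_x = -q¹ u with |u| = |e| = 1, ⟨u,e⟩ = 0, and u_x ≠ 0. Writing q¹ = |u_x| cos ω and q² = |u_x| sin ω for a differentiable ω : ℝ → ℝ, the condition ⟨e_x, u × e⟩ = 0 implies ω_x = ⟨u × u_x, u_xx⟩ / |u_x|². -/
open scoped RealInnerProductSpace

section aux

local notation "E3" => EuclideanSpace ℝ (Fin 3)

lemma cross3_inner_left (a b : E3) : ⟪cross3 a b, a⟫ = 0 := by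
  simp [cross3, crossProduct, PiLp.inner_apply, Fin.sum_univ_three]; ring

lemma cross3_inner_right (a b : E3) : ⟪cross3 a b, b⟫ = 0 := by
  simp [cross3, crossProduct, PiLp.inner_apply, Fin.sum_univ_three]; ring

lemma inner_cross3_self (a b : E3) :
    ⟪cross3 a b, cross3 a b⟫ = ⟪a,a⟫ * ⟪b,b⟫ - ⟪a,b⟫ ^ 2 := by
  simp only [PiLp.inner_apply]
  simp [cross3, crossProduct, PiLp.inner_apply, Fin.sum_univ_three]; ring

lemma cross3_cross3 (a b : E3) : cross3 a (cross3 a b) = ⟪a,b⟫ • a - ⟪a,a⟫ • b := by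
  ext i
  fin_cases i <;>
    simp only [PiLp.inner_apply] <;>
    simp [cross3, crossProduct, PiLp.inner_apply, Fin.sum_univ_three] <;> ring

lemma cross3_smul_self (a : E3) (t : ℝ) : cross3 a (t • a) = 0 := by
  ext i
  fin_cases i <;> simp [cross3, crossProduct] <;> { rw [mul_comm]; simp }

lemma cross3_inner_left' (a b : E3) : ⟪a, cross3 a b⟫ = 0 := by
  simp [cross3, crossProduct, PiLp.inner_apply, Fin.sum_univ_three]; ring

lemma cross3_inner_right' (a b : E3) : ⟪b, cross3 a b⟫ = 0 := by
  simp [cross3, crossProduct, PiLp.inner_apply, Fin.sum_univ_three]; ring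

lemma cross3_comb (a b c : E3) (s t : ℝ) :
    cross3 a (s • b + t • c) = s • cross3 a b + t • cross3 a c := by
  ext i
  fin_cases i <;> simp [cross3, crossProduct] <;> ring

noncomputable def crossL : E3 →ₗ[ℝ] E3 →ₗ[ℝ] E3 :=
  LinearMap.mk₂ ℝ cross3
    (fun a b c => by ext i; fin_cases i <;> simp [cross3, crossProduct] <;> ring)
    (fun t a b => by ext i; fin_cases i <;> simp [cross3, crossProduct] <;> ring)
    (fun a b c => by ext i; fin_cases i <;> simp [cross3, crossProduct] <;> ring)
    (fun t a b => by ext i; fin_cases i <;> simp [cross3, crossProduct] <;> ring)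

noncomputable def crossCLM : E3 →L[ℝ] E3 →L[ℝ] E3 :=
  LinearMap.toContinuousLinearMap
    { toFun := fun a => LinearMap.toContinuousLinearMap (crossL a),
      map_add' := fun a b => by ext v; simp [crossL],
      map_smul' := fun t a => by ext v; simp [crossL] }

@[simp] lemma crossCLM_apply (a b : E3) : crossCLM a b = cross3 a b := rfl

lemma HasDerivAt.cross3' {f g : ℝ → E3} {x : ℝ} {f' g' : E3}
    (hf : HasDerivAt f f' x) (hg : HasDerivAt g g' x) :
    HasDerivAt (fun t => cross3 (f t) (g t)) (cross3 f' (g x) + cross3 (f x) g') x := by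
  have h1 : HasDerivAt (fun t => crossCLM (f t)) (crossCLM f') x :=
    (crossCLM.hasFDerivAt.comp_hasDerivAt x hf)
  simpa using h1.clm_apply hg

end aux

theorem angle_derivative_is_torsion
    (u e : ℝ → EuclideanSpace ℝ (Fin 3))
    (hu : ContDiff ℝ 2 u) (he : Differentiable ℝ e)
    (q1 q2 : ℝ → ℝ)
    (hux : ∀ x, deriv u x = q1 x • e x + q2 x • cross3 (u x) (e x))
    (hex : ∀ x, deriv e x = -(q1 x) • u x)
    (hun : ∀ x, ‖u x‖ = 1) (hen : ∀ x, ‖e x‖ = 1) (hue : ∀ x, ⟪u x, e x⟫ = 0)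
    (huxne : ∀ x, deriv u x ≠ 0)
    (ω : ℝ → ℝ) (hω : Differentiable ℝ ω)
    (hq1 : ∀ x, q1 x = ‖deriv u x‖ * Real.cos (ω x))
    (hq2 : ∀ x, q2 x = ‖deriv u x‖ * Real.sin (ω x))
    (horth : ∀ x, ⟪deriv e x, cross3 (u x) (e x)⟫ = 0) :
    ∀ x, deriv ω x =
      ⟪cross3 (u x) (deriv u x), deriv (deriv u) x⟫ / ‖deriv u x‖ ^ 2 := by
  -- differentiability facts
  have hud : Differentiable ℝ u := hu.differentiable (by norm_num)
  have hu'd : Differentiable ℝ (deriv u) := by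
    have h2 : ContDiff ℝ ((1:ℕ∞)+1) u := by norm_num at hu ⊢; exact hu
    exact (contDiff_succ_iff_deriv.mp h2).2.2.differentiable (by simp)
  -- basic inner product values
  have huu : ∀ y, ⟪u y, u y⟫ = 1 := fun y => by
    rw [real_inner_self_eq_norm_sq, hun, one_pow]
  have hee : ∀ y, ⟪e y, e y⟫ = 1 := fun y => by
    rw [real_inner_self_eq_norm_sq, hen, one_pow]
  have hCC : ∀ y, ⟪cross3 (u y) (e y), cross3 (u y) (e y)⟫ = 1 := fun y => by
    rw [inner_cross3_self, huu, hee, hue]; ring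
  -- q1, q2 as inner products
  have hq1i : ∀ y, q1 y = ⟪deriv u y, e y⟫ := fun y => by
    rw [hux y, inner_add_left, real_inner_smul_left, real_inner_smul_left, hee,
      cross3_inner_right]
    ring
  have hq2i : ∀ y, q2 y = ⟪deriv u y, cross3 (u y) (e y)⟫ := fun y => by
    rw [hux y, inner_add_left, real_inner_smul_left, real_inner_smul_left, hCC,
      cross3_inner_right']
    ring
  have hu'u : ∀ y, ⟪deriv u y, u y⟫ = 0 := fun y => by
    rw [hux y, inner_add_left, real_inner_smul_left, real_inner_smul_left,
      real_inner_comm (u y) (e y), hue, cross3_inner_left]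
    ring
  intro x
  set r : ℝ := ‖deriv u x‖ with hr
  have hrne : r ≠ 0 := by simpa [hr] using huxne x
  set a : ℝ := ⟪deriv (deriv u) x, e x⟫ with ha
  set b : ℝ := ⟪deriv (deriv u) x, cross3 (u x) (e x)⟫ with hb
  -- derivative of q1
  have hq1' : HasDerivAt q1 a x := by
    have h := HasDerivAt.inner ℝ ((hu'd x).hasDerivAt) ((he x).hasDerivAt)
    have hval : ⟪deriv u x, deriv e x⟫ + ⟪deriv (deriv u) x, e x⟫ = a := by
      rw [hex x, real_inner_smul_right, hu'u]; ring
    rw [hval] at h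
    exact h.congr_of_eventuallyEq (Filter.Eventually.of_forall fun y => (hq1i y))
  -- derivative of q2
  have hq2' : HasDerivAt q2 b x := by
    have hC : HasDerivAt (fun y => cross3 (u y) (e y))
        (cross3 (deriv u x) (e x) + cross3 (u x) (deriv e x)) x :=
      HasDerivAt.cross3' ((hud x).hasDerivAt) ((he x).hasDerivAt)
    have h := HasDerivAt.inner ℝ ((hu'd x).hasDerivAt) hC
    have hval : ⟪deriv u x, cross3 (deriv u x) (e x) + cross3 (u x) (deriv e x)⟫
        + ⟪deriv (deriv u) x, cross3 (u x) (e x)⟫ = b := by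
      rw [inner_add_right, hex x, cross3_smul_self, inner_zero_right,
        real_inner_comm, cross3_inner_left]
      ring
    rw [hval] at h
    exact h.congr_of_eventuallyEq (Filter.Eventually.of_forall fun y => (hq2i y))
  -- derivative of ω
  have hω' : HasDerivAt ω (deriv ω x) x := (hω x).hasDerivAt
  -- the zero function G
  have hG : HasDerivAt (fun y => q2 y * Real.cos (ω y) - q1 y * Real.sin (ω y))
      (b * Real.cos (ω x) + q2 x * (-Real.sin (ω x) * deriv ω x)
        - (a * Real.sin (ω x) + q1 x * (Real.cos (ω x) * deriv ω x))) x :=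
    (hq2'.mul hω'.cos).sub (hq1'.mul hω'.sin)
  have hGzero : HasDerivAt (fun y => q2 y * Real.cos (ω y) - q1 y * Real.sin (ω y)) 0 x := by
    have : (fun y => q2 y * Real.cos (ω y) - q1 y * Real.sin (ω y)) = fun _ => (0:ℝ) := by
      funext y
      rw [hq1 y, hq2 y]; ring
    rw [this]
    exact hasDerivAt_const x 0
  have key : b * Real.cos (ω x) - a * Real.sin (ω x)
      = deriv ω x * (q2 x * Real.sin (ω x) + q1 x * Real.cos (ω x)) := by
    have := hG.unique hGzero
    nlinarith [this]
  -- compute the torsion inner product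
  have hcr : cross3 (u x) (deriv u x)
      = q1 x • cross3 (u x) (e x) - q2 x • e x := by
    rw [hux x, cross3_comb, cross3_cross3, hue, huu]
    ext i
    simp
    ring
  have hT : ⟪cross3 (u x) (deriv u x), deriv (deriv u) x⟫ = q1 x * b - q2 x * a := by
    rw [hcr, inner_sub_left, real_inner_smul_left, real_inner_smul_left, ha, hb,
      real_inner_comm (cross3 (u x) (e x)) (deriv (deriv u) x),
      real_inner_comm (e x) (deriv (deriv u) x)]
  -- conclude
  have hsum : q2 x * Real.sin (ω x) + q1 x * Real.cos (ω x) = r := by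
    rw [hq1 x, hq2 x, ← hr]
    linear_combination r * Real.sin_sq_add_cos_sq (ω x)
  rw [hsum] at key
  rw [hT, hq1 x, hq2 x, ← hr, eq_div_iff (pow_ne_zero 2 hrne)]
  linear_combination (-r) * key
end
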